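/- Let A be a QFA with rational-entried unitary matrices X_i, rational unit initial vector s ∈ R^n, and rational orthogonal projection P, and let λ ∈ Q with 0 ≤ λ ≤ 1. Write λ = a_1²+a_2²+a_3²+a_4² and 1−λ = b_1²+b_2²+b_3²+b_4² with all a_i, b_i ∈ Q. Define B on R^{n+7} by X_i^B = diag(X_i, I_7), s^B = (a_1 s, a_2, a_3, a_4, b_1, b_2, b_3, b_4), P^B = diag(P, I_3, 0_4). Then B is a valid QFA with rational entries and Val_B(w) = a_1² Val_A(w) + a_2² + a_3² + a_4² for every word w. -/
import Mathlib


open Matrix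

theorem qfa_rational_threshold_shift {n : ℕ} {ι : Type*}
    -- the QFA `A` has rational entries: we work over `ℚ`
    (X : ι → Matrix (Fin n) (Fin n) ℚ) (s : Fin n → ℚ) (P : Matrix (Fin n) (Fin n) ℚ)
    (hX : ∀ i, X i * (X i)ᵀ = 1)
    (hs : ∑ i, (s i) ^ 2 = 1)
    (hP : P * P = P ∧ Pᵀ = P)
    (lam : ℚ) (hlam : 0 ≤ lam ∧ lam ≤ 1)
    (a b : Fin 4 → ℚ)
    (ha : lam = a 0 ^ 2 + a 1 ^ 2 + a 2 ^ 2 + a 3 ^ 2)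
    (hb : 1 - lam = b 0 ^ 2 + b 1 ^ 2 + b 2 ^ 2 + b 3 ^ 2) :
    let XB : ι → Matrix (Fin n ⊕ Fin 7) (Fin n ⊕ Fin 7) ℚ :=
      fun i => Matrix.fromBlocks (X i) 0 0 1
    let sB : (Fin n ⊕ Fin 7) → ℚ :=
      Sum.elim (fun j => a 0 * s j) ![a 1, a 2, a 3, b 0, b 1, b 2, b 3]
    let PB : Matrix (Fin n ⊕ Fin 7) (Fin n ⊕ Fin 7) ℚ :=
      Matrix.fromBlocks P 0 0 (Matrix.diagonal ![1, 1, 1, 0, 0, 0, 0])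
    (∀ i, XB i * (XB i)ᵀ = 1) ∧
    (∑ j, (sB j) ^ 2 = 1) ∧
    (PB * PB = PB ∧ PBᵀ = PB) ∧
    (∀ w : List ι,
      ∑ j, (Matrix.vecMul sB ((w.map XB).prod * PB) j) ^ 2
        = a 0 ^ 2 * (∑ j, (Matrix.vecMul s ((w.map X).prod * P) j) ^ 2)
            + a 1 ^ 2 + a 2 ^ 2 + a 3 ^ 2) := by
  intro XB sB PB
  refine ⟨?_, ?_, ⟨?_, ?_⟩, ?_⟩
  · intro i
    simp only [XB, fromBlocks_transpose, transpose_zero, transpose_one,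
      fromBlocks_multiply, hX i]
    simp [← fromBlocks_one]
  · rw [Fintype.sum_sum_type]
    simp only [sB, Sum.elim_inl, Sum.elim_inr, mul_pow, ← Finset.mul_sum, hs]
    rw [Fin.sum_univ_seven]
    simp only [show (![a 1, a 2, a 3, b 0, b 1, b 2, b 3] : Fin 7 → ℚ) 0 = a 1 from rfl,
      show (![a 1, a 2, a 3, b 0, b 1, b 2, b 3] : Fin 7 → ℚ) 1 = a 2 from rfl,
      show (![a 1, a 2, a 3, b 0, b 1, b 2, b 3] : Fin 7 → ℚ) 2 = a 3 from rfl,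
      show (![a 1, a 2, a 3, b 0, b 1, b 2, b 3] : Fin 7 → ℚ) 3 = b 0 from rfl,
      show (![a 1, a 2, a 3, b 0, b 1, b 2, b 3] : Fin 7 → ℚ) 4 = b 1 from rfl,
      show (![a 1, a 2, a 3, b 0, b 1, b 2, b 3] : Fin 7 → ℚ) 5 = b 2 from rfl,
      show (![a 1, a 2, a 3, b 0, b 1, b 2, b 3] : Fin 7 → ℚ) 6 = b 3 from rfl,
      show (![1, 1, 1, 0, 0, 0, 0] : Fin 7 → ℚ) 0 = 1 from rfl,
      show (![1, 1, 1, 0, 0, 0, 0] : Fin 7 → ℚ) 1 = 1 from rfl,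
      show (![1, 1, 1, 0, 0, 0, 0] : Fin 7 → ℚ) 2 = 1 from rfl,
      show (![1, 1, 1, 0, 0, 0, 0] : Fin 7 → ℚ) 3 = 0 from rfl,
      show (![1, 1, 1, 0, 0, 0, 0] : Fin 7 → ℚ) 4 = 0 from rfl,
      show (![1, 1, 1, 0, 0, 0, 0] : Fin 7 → ℚ) 5 = 0 from rfl,
      show (![1, 1, 1, 0, 0, 0, 0] : Fin 7 → ℚ) 6 = 0 from rfl]
    nlinarith [ha, hb]
  · have hd : (fun i => (![1, 1, 1, 0, 0, 0, 0] : Fin 7 → ℚ) i * ![1, 1, 1, 0, 0, 0, 0] i)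
        = ![1, 1, 1, 0, 0, 0, 0] := by
      funext i
      fin_cases i <;> norm_num
    simp only [PB, fromBlocks_multiply, hP.1, Matrix.zero_mul, Matrix.mul_zero,
      add_zero, zero_add, Matrix.diagonal_mul_diagonal, hd]
  · simp only [PB, fromBlocks_transpose, transpose_zero, hP.2, Matrix.diagonal_transpose]
  · intro w
    have hprod : (w.map XB).prod =
        Matrix.fromBlocks ((w.map X).prod) 0 0 1 := by
      induction w with
      | nil => simp [← fromBlocks_one]
      | cons h t ih =>
        simp only [List.map_cons, List.prod_cons, ih, XB, fromBlocks_multiply]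
        simp
    rw [hprod]
    simp only [PB, fromBlocks_multiply, Matrix.zero_mul, Matrix.mul_zero, add_zero,
      zero_add, Matrix.one_mul, Matrix.mul_one]
    rw [Fintype.sum_sum_type]
    have h1 : ∀ j : Fin n, Matrix.vecMul sB
        (Matrix.fromBlocks ((w.map X).prod * P) 0 0 (Matrix.diagonal ![1,1,1,0,0,0,0]))
        (Sum.inl j) = a 0 * Matrix.vecMul s ((w.map X).prod * P) j := by
      intro j
      rw [Matrix.vecMul, dotProduct, Fintype.sum_sum_type]
      simp [sB, Matrix.vecMul, dotProduct, Finset.mul_sum, mul_assoc]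
    have h2 : ∀ k : Fin 7, Matrix.vecMul sB
        (Matrix.fromBlocks ((w.map X).prod * P) 0 0 (Matrix.diagonal ![1,1,1,0,0,0,0]))
        (Sum.inr k) = sB (Sum.inr k) * (![1,1,1,0,0,0,0] : Fin 7 → ℚ) k := by
      intro k
      rw [Matrix.vecMul, dotProduct, Fintype.sum_sum_type]
      simp [Matrix.diagonal_apply, Finset.sum_ite_eq, mul_comm]
    simp only [h1, h2]
    rw [Fin.sum_univ_seven]
    simp only [sB, Sum.elim_inr]
    simp only [show (![a 1, a 2, a 3, b 0, b 1, b 2, b 3] : Fin 7 → ℚ) 0 = a 1 from rfl,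
      show (![a 1, a 2, a 3, b 0, b 1, b 2, b 3] : Fin 7 → ℚ) 1 = a 2 from rfl,
      show (![a 1, a 2, a 3, b 0, b 1, b 2, b 3] : Fin 7 → ℚ) 2 = a 3 from rfl,
      show (![a 1, a 2, a 3, b 0, b 1, b 2, b 3] : Fin 7 → ℚ) 3 = b 0 from rfl,
      show (![a 1, a 2, a 3, b 0, b 1, b 2, b 3] : Fin 7 → ℚ) 4 = b 1 from rfl,
      show (![a 1, a 2, a 3, b 0, b 1, b 2, b 3] : Fin 7 → ℚ) 5 = b 2 from rfl,
      show (![a 1, a 2, a 3, b 0, b 1, b 2, b 3] : Fin 7 → ℚ) 6 = b 3 from rfl,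
      show (![1, 1, 1, 0, 0, 0, 0] : Fin 7 → ℚ) 0 = 1 from rfl,
      show (![1, 1, 1, 0, 0, 0, 0] : Fin 7 → ℚ) 1 = 1 from rfl,
      show (![1, 1, 1, 0, 0, 0, 0] : Fin 7 → ℚ) 2 = 1 from rfl,
      show (![1, 1, 1, 0, 0, 0, 0] : Fin 7 → ℚ) 3 = 0 from rfl,
      show (![1, 1, 1, 0, 0, 0, 0] : Fin 7 → ℚ) 4 = 0 from rfl,
      show (![1, 1, 1, 0, 0, 0, 0] : Fin 7 → ℚ) 5 = 0 from rfl,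
      show (![1, 1, 1, 0, 0, 0, 0] : Fin 7 → ℚ) 6 = 0 from rfl]
    simp [mul_pow, ← Finset.mul_sum]
    ring
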